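/- Let μ be a strong limit cardinal of cofinality ℵ₀. Then the following are equivalent: (A) there is a universal locally finite group of cardinality μ; (B) for every ℵ₀-indecomposable locally finite group H of cardinality < μ there exist an index set I of cardinality ≤ μ and a family ⟨G_α : α ∈ I⟩ of locally finite groups of cardinality μ, each containing H as a subgroup, such that every locally finite group G of cardinality μ containing H embeds into some G_α over H. -/

import Mathlib

universe u
open Cardinal

/-- A group is locally finite if every finitely generated subgroup is finite. -/
def LocallyFiniteGroup (G : Type u) [Group G] : Prop :=
  ∀ s : Finset G, Set.Finite ((Subgroup.closure (s : Set G) : Subgroup G) : Set G)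

/-- A group `G` is `θ`-indecomposable when every `⊆`-increasing sequence
`⟨M_i : i < θ⟩` of subgroups of `G` with union `G` contains `G` as a member. -/
def GroupIndecomp (θ : Cardinal.{u}) (G : Type u) [Group G] : Prop :=
  ∀ M : θ.ord.ToType → Subgroup G, Monotone M → (⨆ i, M i) = ⊤ → ∃ i, M i = ⊤

/-- `G` is a universal locally finite group of cardinality `μ`. -/
def UniversalLF (μ : Cardinal.{u}) (G : Type u) [Group G] : Prop :=
  LocallyFiniteGroup G ∧ #G = μ ∧
    ∀ (H : Type u) (_ : Group H), LocallyFiniteGroup H → #H = μ →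
      ∃ f : H →* G, Function.Injective f

section Auxiliary

open Function

/-- The cardinality of the subgroup generated by a set. -/
lemma myMkClosureLe {G : Type u} [Group G] (s : Set G) :
    #(Subgroup.closure s) ≤ max #s ℵ₀ := by
  rcases isEmpty_or_nonempty s with h | h
  · have : s = ∅ := by
      ext x
      simp only [Set.mem_empty_iff_false, iff_false]
      exact fun hx => h.elim ⟨x, hx⟩
    rw [this, Subgroup.closure_empty]
    exact Cardinal.mk_le_aleph0.trans (le_max_right _ _)
  · have hr : (FreeGroup.lift (Subtype.val : s → G)).range = Subgroup.closure s := by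
      rw [FreeGroup.range_lift_eq_closure, Subtype.range_coe]
    have h1 : #(Subgroup.closure s) ≤ #(FreeGroup s) := by
      rw [← hr]
      exact Cardinal.mk_le_of_surjective
        (MonoidHom.rangeRestrict_surjective (FreeGroup.lift (Subtype.val : s → G)))
    rw [Cardinal.mk_freeGroup] at h1
    exact h1

lemma lf_of_finite {G : Type u} [Group G] [Finite G] : LocallyFiniteGroup G :=
  fun _ => Set.toFinite _

lemma lf_pi {κ : Type u} [Fintype κ] (G : κ → Type u) [∀ i, Group (G i)]
    (h : ∀ i, LocallyFiniteGroup (G i)) : LocallyFiniteGroup (∀ i, G i) := by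
  classical
  intro s
  have hle : Subgroup.closure (s : Set (∀ i, G i)) ≤
      Subgroup.pi Set.univ
        (fun i => Subgroup.closure ((s.image (fun f => f i) : Finset (G i)) : Set (G i))) := by
    rw [Subgroup.closure_le]
    intro f hf i _
    exact Subgroup.subset_closure (by
      simp only [Finset.coe_image, Set.mem_image]
      exact ⟨f, hf, rfl⟩)
  refine Set.Finite.subset ?_ hle
  rw [Subgroup.coe_pi]
  exact Set.Finite.pi (fun i => h i _)

/-- Support of a dependent function into groups. -/
def suppSet {ι : Type u} {G : ι → Type u} [∀ i, Group (G i)] (f : ∀ i, G i) : Set ι :=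
  {i | f i ≠ 1}

/-- The restricted direct product of a family of groups. -/
def restProd {ι : Type u} (G : ι → Type u) [∀ i, Group (G i)] : Subgroup (∀ i, G i) where
  carrier := {f | (suppSet f).Finite}
  one_mem' := by
    have : suppSet (1 : ∀ i, G i) = ∅ := by
      ext i; simp [suppSet]
    simp only [Set.mem_setOf_eq, this]
    exact Set.finite_empty
  mul_mem' := fun {a b} ha hb => by
    refine ((Set.Finite.union ha hb).subset ?_ : (suppSet (a * b)).Finite)
    intro i hi
    by_contra hn
    simp only [Set.mem_union, suppSet, Set.mem_setOf_eq, not_or, not_not] at hn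
    exact hi (by simp [suppSet, Pi.mul_apply, hn.1, hn.2])
  inv_mem' := fun {a} ha => by
    refine (ha.subset ?_ : (suppSet a⁻¹).Finite)
    intro i hi
    simp only [suppSet, Set.mem_setOf_eq, Pi.inv_apply, ne_eq, inv_eq_one] at hi ⊢
    exact hi

lemma mem_restProd {ι : Type u} {G : ι → Type u} [∀ i, Group (G i)] {f : ∀ i, G i} :
    f ∈ restProd G ↔ (suppSet f).Finite := Iff.rfl

lemma lf_restProd {ι : Type u} (G : ι → Type u) [∀ i, Group (G i)]
    (h : ∀ i, LocallyFiniteGroup (G i)) : LocallyFiniteGroup (restProd G) := by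
  classical
  intro s
  set Tset : Set ι := ⋃ f ∈ (s : Set (restProd G)), suppSet (f : ∀ i, G i) with hT
  have hTfin : Tset.Finite := Set.Finite.biUnion s.finite_toSet (fun f _ => f.2)
  haveI : Fintype Tset := hTfin.fintype
  let π : restProd G →* (∀ x : Tset, G x) :=
    Pi.monoidHom (fun x => (Pi.evalMonoidHom G x.1).comp (restProd G).subtype)
  have hsupp : ∀ f ∈ Subgroup.closure (s : Set (restProd G)), ∀ i, i ∉ Tset →
      (f : ∀ i, G i) i = 1 := by
    let K : Subgroup (restProd G) :=
      { carrier := {f | ∀ i, i ∉ Tset → (f : ∀ i, G i) i = 1}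
        one_mem' := fun i _ => rfl
        mul_mem' := fun {a b} ha hb i hi => by
          have : ((a * b : restProd G) : ∀ i, G i) i = (a : ∀ i, G i) i * (b : ∀ i, G i) i := rfl
          rw [this, ha i hi, hb i hi, one_mul]
        inv_mem' := fun {a} ha i hi => by
          have : ((a⁻¹ : restProd G) : ∀ i, G i) i = ((a : ∀ i, G i) i)⁻¹ := rfl
          rw [this, ha i hi, inv_one] }
    have hK : Subgroup.closure (s : Set (restProd G)) ≤ K := by
      rw [Subgroup.closure_le]
      intro f hf i hi
      by_contra hne
      exact hi (Set.mem_biUnion hf hne)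
    exact fun f hf => hK hf
  have hinj : Set.InjOn π ((Subgroup.closure (s : Set (restProd G)) : Set (restProd G))) := by
    intro f hf g hg hfg
    apply Subtype.ext
    funext i
    by_cases hi : i ∈ Tset
    · exact congrFun hfg ⟨i, hi⟩
    · rw [hsupp f hf i hi, hsupp g hg i hi]
  have himage : π '' ((Subgroup.closure (s : Set (restProd G)) : Set (restProd G))) ⊆
      ((Subgroup.closure ((s.image π : Finset (∀ x : Tset, G x)) : Set (∀ x : Tset, G x)) :
        Subgroup (∀ x : Tset, G x)) : Set _) := by
    rw [Finset.coe_image, ← MonoidHom.map_closure]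
    intro y hy
    obtain ⟨f, hf, rfl⟩ := hy
    exact ⟨f, hf, rfl⟩
  have hfin : Set.Finite (π '' ((Subgroup.closure (s : Set (restProd G)) : Set (restProd G)))) :=
    Set.Finite.subset (lf_pi (fun x : Tset => G x) (fun x => h x) (s.image π)) himage
  exact Set.Finite.of_finite_image hfin hinj

lemma sigma_fun_congr {ι : Type u} {G : ι → Type u} {S S' : Finset ι} (h : S = S')
    {u : ∀ x : {i // i ∈ S}, G x} {v : ∀ x : {i // i ∈ S'}, G x} (hv : HEq u v)
    (i : ι) (hi : i ∈ S) : u ⟨i, hi⟩ = v ⟨i, h ▸ hi⟩ := by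
  subst h
  rw [eq_of_heq hv]

lemma mk_restProd_le {ι : Type u} (G : ι → Type u) [∀ i, Group (G i)] {μ : Cardinal.{u}}
    (hμ : ℵ₀ ≤ μ) (hι : #ι ≤ μ) (hG : ∀ i, #(G i) ≤ μ) : #(restProd G) ≤ μ := by
  classical
  have key : #(restProd G) ≤ #(Σ S : Finset ι, ∀ x : {i // i ∈ S}, G x) := by
    refine Cardinal.mk_le_of_injective (f := fun f =>
      ⟨(mem_restProd.1 f.2).toFinset, fun x => (f : ∀ i, G i) x.1⟩) ?_
    intro f g hfg
    obtain ⟨hS, hu⟩ := Sigma.mk.inj_iff.1 hfg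
    apply Subtype.ext
    funext i
    by_cases hi : i ∈ (mem_restProd.1 f.2).toFinset
    · exact sigma_fun_congr hS hu i hi
    · have hi' : i ∉ (mem_restProd.1 g.2).toFinset := hS ▸ hi
      simp only [Set.Finite.mem_toFinset, suppSet, Set.mem_setOf_eq, not_not] at hi hi'
      rw [hi, hi']
  refine key.trans ?_
  rw [Cardinal.mk_sigma]
  have hbound : ∀ S : Finset ι, #(∀ x : {i // i ∈ S}, G x) ≤ μ := by
    intro S
    rw [Cardinal.mk_pi]
    refine (Cardinal.prod_le_prod _ (fun _ => μ) (fun (x : {i // i ∈ S}) => hG x.1)).trans ?_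
    rw [Cardinal.prod_const']
    rw [Cardinal.mk_coe_finset]
    exact Cardinal.power_nat_le hμ
  refine (Cardinal.sum_le_sum _ (fun _ => μ) hbound).trans ?_
  rw [Cardinal.sum_const']
  have hfs : #(Finset ι) ≤ μ := by
    rcases finite_or_infinite ι with h | h
    · haveI := Fintype.ofFinite ι
      exact (Cardinal.lt_aleph0_of_finite (Finset ι)).le.trans hμ
    · rw [Cardinal.mk_finset_of_infinite]
      exact hι
  calc #(Finset ι) * μ ≤ μ * μ := mul_le_mul' hfs le_rfl
    _ = μ := Cardinal.mul_eq_self hμ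

/-- Embedding of a coordinate into the restricted product. -/
def restProdIncl {ι : Type u} (G : ι → Type u) [∀ i, Group (G i)] [DecidableEq ι] (i : ι) :
    G i →* restProd G := by
  refine MonoidHom.codRestrict (MonoidHom.mulSingle G i) _ (fun g => mem_restProd.2 ?_)
  refine (Set.finite_singleton i).subset ?_
  intro j hj
  simp only [suppSet, Set.mem_setOf_eq, MonoidHom.mulSingle_apply] at hj
  by_contra hij
  exact hj (Pi.mulSingle_eq_of_ne (by simpa using hij) g)

lemma restProdIncl_injective {ι : Type u} (G : ι → Type u) [∀ i, Group (G i)] [DecidableEq ι]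
    (i : ι) : Function.Injective (restProdIncl G i) := by
  intro a b hab
  have h2 : MonoidHom.mulSingle G i a = MonoidHom.mulSingle G i b :=
    congrArg Subtype.val hab
  exact Pi.mulSingle_injective i h2

/-- A relation isomorphism between `ℕ` and the order type of `ℵ₀`. -/
noncomputable def natIso : ((· < ·) : ℕ → ℕ → Prop) ≃r
    ((· < ·) : (ℵ₀ : Cardinal.{u}).ord.ToType → (ℵ₀ : Cardinal.{u}).ord.ToType → Prop) := by
  haveI : IsWellOrder (ℵ₀ : Cardinal.{u}).ord.ToType (· < ·) := isWellOrder_lt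
  refine Classical.choice (Ordinal.lift_type_eq.{0, u, u}.1 ?_)
  rw [Ordinal.type_nat_lt, Ordinal.type_toType, Cardinal.ord_aleph0, Ordinal.lift_omega0,
    Ordinal.lift_id]

lemma indecomp_nat {H : Type u} [Group H] (hind : GroupIndecomp ℵ₀ H)
    (M : ℕ → Subgroup H) (hM : Monotone M) (htop : (⨆ n, M n) = ⊤) : ∃ n, M n = ⊤ := by
  have g := natIso.{u}
  let Mt : (ℵ₀ : Cardinal.{u}).ord.ToType → Subgroup H := fun i => M (g.symm i)
  have hmono : Monotone Mt := by
    intro a b hab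
    rcases eq_or_lt_of_le hab with rfl | hlt
    · exact le_rfl
    · exact hM (le_of_lt (g.symm.map_rel_iff.2 hlt))
  have hsur : Function.Surjective (fun i => (g.symm i : ℕ)) := g.symm.surjective
  have htop' : (⨆ i, Mt i) = ⊤ := by
    rw [hsur.iSup_comp (g := M)]
    exact htop
  obtain ⟨i, hi⟩ := hind Mt hmono htop'
  exact ⟨g.symm i, hi⟩

lemma arrow_lt {μ : Cardinal.{u}} (hsl : μ.IsStrongLimit) {X H : Type u}
    (hX : #X < μ) (hH : #H < μ) : #(H → X) < μ := by
  rcases lt_or_ge (max #X #H) ℵ₀ with h | h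
  · haveI : Finite X := Cardinal.lt_aleph0_iff_finite.1 ((le_max_left _ _).trans_lt h)
    haveI : Finite H := Cardinal.lt_aleph0_iff_finite.1 ((le_max_right _ _).trans_lt h)
    exact (Cardinal.lt_aleph0_of_finite (H → X)).trans_le hsl.aleph0_le
  · set m := max #X #H with hm
    have hmμ : m < μ := max_lt hX hH
    have h1 : #(H → X) ≤ (2 ^ m) ^ m := by
      rw [← Cardinal.power_def]
      refine le_trans (Cardinal.power_le_power_right
        ((le_max_left #X #H).trans (Cardinal.cantor m).le)) ?_
      exact Cardinal.power_le_power_left (Cardinal.power_ne_zero m two_ne_zero)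
        (le_max_right #X #H)
    have h2 : ((2 : Cardinal.{u}) ^ m) ^ m = (2 : Cardinal.{u}) ^ m := by
      rw [← Cardinal.power_mul, Cardinal.mul_eq_self h]
    exact (h1.trans_eq h2).trans_lt (hsl.two_power_lt hmμ)

lemma exists_chain {μ : Cardinal.{u}} (hsl : μ.IsStrongLimit) (hcof : μ.ord.cof = ℵ₀)
    (Gs : Type u) [Group Gs] (hLF : LocallyFiniteGroup Gs) (hcard : #Gs = μ) :
    ∃ Gn : ℕ → Subgroup Gs, Monotone Gn ∧ (⨆ n, Gn n) = ⊤ ∧ ∀ n, #(Gn n) < μ := by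
  classical
  have hmk : #Gs = #(μ.ord.ToType) := by rw [Cardinal.mk_ord_toType]; exact hcard
  obtain ⟨b⟩ := Cardinal.eq.mp hmk
  haveI : IsWellOrder μ.ord.ToType (· < ·) := isWellOrder_lt
  obtain ⟨S, hSub, hScard⟩ := Order.exists_cof_eq μ.ord.ToType
  rw [Ordinal.cof_toType, hcof] at hScard
  have hSc' : #S = #(ULift.{u} ℕ) := by
    rw [hScard]; simp
  obtain ⟨c⟩ := Cardinal.eq.mp hSc'
  let v : ℕ → μ.ord.ToType := fun n =>
    (Finset.range (n + 1)).sup' Finset.nonempty_range_add_one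
      (fun k => (c.symm (ULift.up k) : μ.ord.ToType))
  have hvmono : Monotone v := by
    intro a b' hab
    exact Finset.sup'_mono _ (Finset.range_subset_range.2 (by omega)) Finset.nonempty_range_add_one
  have hvcof : ∀ x : μ.ord.ToType, ∃ n, x ≤ v n := by
    intro x
    obtain ⟨y, hyS, hy⟩ := hSub x
    refine ⟨(c ⟨y, hyS⟩).down, le_trans hy ?_⟩
    have hy2 : (c.symm (ULift.up ((c ⟨y, hyS⟩).down)) : μ.ord.ToType) = y := by
      have h3 : ULift.up ((c ⟨y, hyS⟩).down) = c ⟨y, hyS⟩ := rfl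
      rw [h3, Equiv.symm_apply_apply]
    calc y = (c.symm (ULift.up ((c ⟨y, hyS⟩).down)) : μ.ord.ToType) := hy2.symm
      _ ≤ v ((c ⟨y, hyS⟩).down) := Finset.le_sup'
          (fun k => (c.symm (ULift.up k) : μ.ord.ToType))
          (Finset.self_mem_range_succ ((c ⟨y, hyS⟩).down))
  let A : ℕ → Set Gs := fun n => {x | b x ≤ v n}
  have hAcard : ∀ n, #(A n) < μ := by
    intro n
    have h1 : #(A n) ≤ #(Set.Iic (v n)) :=
      Cardinal.mk_le_of_injective (f := fun x : A n => (⟨b x.1, x.2⟩ : Set.Iic (v n)))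
        (fun x y hxy => Subtype.ext (b.injective (congrArg Subtype.val hxy)))
    have h2 : #(Set.Iic (v n)) < μ := by
      have : Set.Iic (v n) = Set.Iio (v n) ∪ {v n} := by
        rw [Set.Iio_union_right]
      rw [this]
      refine (Cardinal.mk_union_le _ _).trans_lt ?_
      refine Cardinal.add_lt_of_lt hsl.aleph0_le (Cardinal.mk_Iio_ord_toType (v n)) ?_
      simpa using (one_lt_aleph0.trans_le hsl.aleph0_le)
    exact h1.trans_lt h2
  refine ⟨fun n => Subgroup.closure (A n), ?_, ?_, ?_⟩
  · intro a b' hab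
    exact Subgroup.closure_mono (fun x hx => le_trans hx (hvmono hab))
  · rw [eq_top_iff]
    intro x _
    obtain ⟨n, hn⟩ := hvcof (b x)
    exact (le_iSup (fun n => Subgroup.closure (A n)) n) (Subgroup.subset_closure hn)
  · intro n
    rcases lt_or_ge #(A n) ℵ₀ with h | h
    · have hfin : (A n).Finite := Cardinal.lt_aleph0_iff_set_finite.1 h
      have hcl := hLF hfin.toFinset
      rw [hfin.coe_toFinset] at hcl
      haveI : Finite (Subgroup.closure (A n)) := hcl
      exact (Cardinal.lt_aleph0_of_finite _).trans_le hsl.aleph0_le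
    · exact (myMkClosureLe (A n)).trans_lt (by rw [max_eq_left h]; exact hAcard n)

end Auxiliary

theorem universal_iff_family (μ : Cardinal.{u})
    (hsl : μ.IsStrongLimit) (hcof : μ.ord.cof = ℵ₀) :
    (∃ (G : Type u) (_ : Group G), UniversalLF μ G) ↔
    (∀ (H : Type u) (_ : Group H), LocallyFiniteGroup H → GroupIndecomp ℵ₀ H → #H < μ →
      ∃ (I : Type u), #I ≤ μ ∧
        ∃ (Gf : I → Type u) (_ : ∀ α, Group (Gf α)) (e : ∀ α, H →* Gf α),
          (∀ α, LocallyFiniteGroup (Gf α) ∧ #(Gf α) = μ ∧ Function.Injective (e α)) ∧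
          ∀ (G : Type u) (_ : Group G), LocallyFiniteGroup G → #G = μ →
            ∀ eG : H →* G, Function.Injective eG →
              ∃ α, ∃ f : G →* Gf α, Function.Injective f ∧ f.comp eG = e α) := by
  classical
  constructor
  · -- forward direction
    rintro ⟨Gs, instGs, hGLF, hGcard, hGuniv⟩
    intro H instH hHLF hHind hHcard
    obtain ⟨Gn, hGnmono, hGntop, hGnlt⟩ := exists_chain hsl hcof Gs hGLF hGcard
    -- the index set
    refine ⟨{j : H →* Gs // Function.Injective j ∧ ∃ n, ∀ h, j h ∈ Gn n}, ?_, ?_⟩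
    · -- cardinality bound
      have key : #{j : H →* Gs // Function.Injective j ∧ ∃ n, ∀ h, j h ∈ Gn n} ≤
          #(Σ n : ULift.{u} ℕ, (H → (Gn n.down))) := by
        refine Cardinal.mk_le_of_injective (f := fun α =>
          ⟨ULift.up α.2.2.choose, fun h => ⟨α.1 h, α.2.2.choose_spec h⟩⟩) ?_
        intro α β hab
        have := congrArg
          (fun p : Σ n : ULift.{u} ℕ, (H → (Gn n.down)) => fun h : H => ((p.2 h : Gn p.1.down) : Gs))
          hab
        apply Subtype.ext
        apply DFunLike.ext
        intro h
        exact congrFun this h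
      refine key.trans ?_
      rw [Cardinal.mk_sigma]
      have hbound : ∀ n : ULift.{u} ℕ, #(H → (Gn n.down)) ≤ μ :=
        fun n => (arrow_lt hsl (hGnlt n.down) hHcard).le
      refine (Cardinal.sum_le_sum _ (fun _ => μ) hbound).trans ?_
      rw [Cardinal.sum_const']
      have : #(ULift.{u} ℕ) = ℵ₀ := by simp
      rw [this]
      calc ℵ₀ * μ ≤ μ * μ := mul_le_mul' hsl.aleph0_le le_rfl
        _ = μ := Cardinal.mul_eq_self hsl.aleph0_le
    · refine ⟨fun _ => Gs, fun _ => instGs, fun α => α.1,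
        fun α => ⟨hGLF, hGcard, α.2.1⟩, ?_⟩
      intro G instG hLF2 hcard2 eG heG
      obtain ⟨f, hf⟩ := hGuniv G instG hLF2 hcard2
      have hjinj : Function.Injective (f.comp eG) := hf.comp heG
      -- indecomposability: the range of f.comp eG lands in some Gn n
      have hmem : ∃ n, ∀ h, (f.comp eG) h ∈ Gn n := by
        have htop : (⨆ n, (Gn n).comap (f.comp eG)) = ⊤ := by
          rw [eq_top_iff]
          intro h _
          have h1 : (f.comp eG) h ∈ ⨆ n, Gn n := by rw [hGntop]; trivial
          obtain ⟨n, hn⟩ := (Subgroup.mem_iSup_of_directed hGnmono.directed_le).1 h1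
          exact (le_iSup (fun n => (Gn n).comap (f.comp eG)) n) (Subgroup.mem_comap.2 hn)
        obtain ⟨n, hn⟩ := indecomp_nat hHind (fun n => (Gn n).comap (f.comp eG))
          (fun a b hab => Subgroup.comap_mono (hGnmono hab)) htop
        exact ⟨n, fun h => Subgroup.mem_comap.1 (hn ▸ Subgroup.mem_top h : h ∈ _)⟩
      exact ⟨⟨f.comp eG, hjinj, hmem⟩, f, hf, rfl⟩
  · -- backward direction
    intro hB
    -- apply to the trivial group
    have hPLF : LocallyFiniteGroup PUnit.{u + 1} := lf_of_finite
    have hPind : GroupIndecomp ℵ₀ PUnit.{u + 1} := by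
      intro M hM htop
      have hne : Nonempty (ℵ₀ : Cardinal.{u}).ord.ToType := by
        rw [Ordinal.toType_nonempty_iff_ne_zero, Cardinal.ord_aleph0]
        exact Ordinal.omega0_ne_zero
      obtain ⟨i⟩ := hne
      refine ⟨i, ?_⟩
      rw [eq_top_iff]
      intro x _
      have : x = 1 := Subsingleton.elim x 1
      rw [this]
      exact one_mem _
    have hPcard : #PUnit.{u + 1} < μ := by
      rw [Cardinal.mk_punit]
      exact one_lt_aleph0.trans_le hsl.aleph0_le
    obtain ⟨I, hI, Gf, instGf, e, hprops, huniv⟩ :=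
      hB PUnit.{u + 1} inferInstance hPLF hPind hPcard
    letI := instGf
    -- a witness locally finite group of cardinality μ
    let W := restProd (fun _ : μ.ord.ToType => Multiplicative (ULift.{u} (ZMod 2)))
    have hWLF : LocallyFiniteGroup W :=
      lf_restProd _ (fun _ => lf_of_finite)
    have hWcard : #W = μ := by
      apply le_antisymm
      · refine mk_restProd_le _ hsl.aleph0_le (by rw [Cardinal.mk_ord_toType]) (fun i => ?_)
        have : #(Multiplicative (ULift.{u} (ZMod 2))) < ℵ₀ := Cardinal.lt_aleph0_of_finite _
        exact this.le.trans hsl.aleph0_le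
      · refine le_trans (le_of_eq (Cardinal.mk_ord_toType μ).symm) ?_
        refine Cardinal.mk_le_of_injective (f := fun x =>
          restProdIncl _ x (Multiplicative.ofAdd (ULift.up (1 : ZMod 2)))) ?_
        intro x y hxy
        by_contra hne
        have h1 := congrFun (congrArg Subtype.val hxy) x
        have hx : ((restProdIncl (fun _ : μ.ord.ToType => Multiplicative (ULift.{u} (ZMod 2))) x
            (Multiplicative.ofAdd (ULift.up (1 : ZMod 2))) : W) :
              ∀ _ : μ.ord.ToType, Multiplicative (ULift.{u} (ZMod 2))) x =
            Multiplicative.ofAdd (ULift.up (1 : ZMod 2)) := by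
          simp [restProdIncl, MonoidHom.mulSingle_apply]
        have hy : ((restProdIncl (fun _ : μ.ord.ToType => Multiplicative (ULift.{u} (ZMod 2))) y
            (Multiplicative.ofAdd (ULift.up (1 : ZMod 2))) : W) :
              ∀ _ : μ.ord.ToType, Multiplicative (ULift.{u} (ZMod 2))) x = 1 := by
          simp only [restProdIncl, MonoidHom.codRestrict_apply, MonoidHom.mulSingle_apply]
          exact Pi.mulSingle_eq_of_ne hne _
        rw [hx, hy] at h1
        have : (1 : ZMod 2) = 0 := by
          have h2 := congrArg (fun z => (Multiplicative.toAdd z).down) h1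
          exact h2
        simp at this
      -- (end of hWcard)
    -- obtain an index α₀
    have hone : Function.Injective ((1 : PUnit.{u + 1} →* W)) :=
      fun a b _ => Subsingleton.elim a b
    obtain ⟨α₀, f₀, hf₀, -⟩ := huniv W inferInstance hWLF hWcard 1 hone
    -- the universal group
    refine ⟨restProd Gf, inferInstance, lf_restProd Gf (fun α => (hprops α).1), ?_, ?_⟩
    · apply le_antisymm
      · exact mk_restProd_le Gf hsl.aleph0_le hI (fun α => ((hprops α).2.1).le)
      · rw [← (hprops α₀).2.1]
        exact Cardinal.mk_le_of_injective (restProdIncl_injective Gf α₀)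
    · intro G instG hLF2 hcard2
      have hone' : Function.Injective ((1 : PUnit.{u + 1} →* G)) :=
        fun a b _ => Subsingleton.elim a b
      obtain ⟨α, f, hf, -⟩ := huniv G instG hLF2 hcard2 1 hone'
      exact ⟨(restProdIncl Gf α).comp f, (restProdIncl_injective Gf α).comp hf⟩
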